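/- arXiv:2109.14932 — 7 statements merged into one kernel-verified Lean document; each statement's English description precedes it below -/
import Mathlib

section
/- Characterization of shared-constraint Nash equilibria: A joint strategy x* ∈ X is a Nash equilibrium of the shared constraint game (f, X) if and only if x* ∈ C-argmin{(x, f(x)) : x ∈ X}, where C = {(x,f) : ∃ i, x_{-i} = 0 and f_i ≥ 0}. That is, NE(f, X) = C-argmin{(x, f(x)) : x ∈ X}. -/
/-- The set of `D`-Pareto minimizers of `g` over the feasible set `S`. -/
def paretoArgmin {A Z : Type*} [AddCommGroup Z] (D : Set Z) (g : A → Z)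
    (S : Set A) : Set A :=
  {xs | xs ∈ S ∧ ∀ x ∈ S, g xs - g x ∈ D → g x - g xs ∈ D}

/-- The cone `C_i` for player `i` inside `(∏ j, X j) × ℝ^N`. -/
def playerCone {N : ℕ} (X : Fin N → Type*) [∀ j, AddCommGroup (X j)]
    [∀ j, Module ℝ (X j)] (i : Fin N) : Set ((∀ j, X j) × (Fin N → ℝ)) :=
  {p | (∀ j, j ≠ i → p.1 j = 0) ∧ 0 ≤ p.2 i}

/-- The non-convex ordering cone `C = ⋃ i, C_i`. -/
def bigCone {N : ℕ} (X : Fin N → Type*) [∀ j, AddCommGroup (X j)]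
    [∀ j, Module ℝ (X j)] : Set ((∀ j, X j) × (Fin N → ℝ)) :=
  {p | ∃ i, (∀ j, j ≠ i → p.1 j = 0) ∧ 0 ≤ p.2 i}

/-- The set of Nash equilibria of the shared constraint game `(f, S)`: feasible
joint strategies `x*` such that no player `i` can strictly decrease her cost by
a unilateral feasible deviation. -/
def nashEq {N : ℕ} {X : Fin N → Type*} (f : (∀ j, X j) → Fin N → ℝ)
    (S : Set (∀ j, X j)) : Set (∀ j, X j) :=
  {xs | xs ∈ S ∧ ∀ (i : Fin N) (xi : X i),
    Function.update xs i xi ∈ S → f xs i ≤ f (Function.update xs i xi) i}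


/-- A joint strategy `x* ∈ X` is a Nash equilibrium of the shared constraint
game `(f, X)` iff it is a `C`-Pareto minimizer of `x ↦ (x, f(x))` over `X`:
`NE(f, X) = C-argmin {(x, f(x)) : x ∈ X}`. -/
theorem nashEq_eq_paretoArgmin {N : ℕ} (X : Fin N → Type*)
    [∀ j, AddCommGroup (X j)] [∀ j, Module ℝ (X j)]
    (f : (∀ j, X j) → Fin N → ℝ) (S : Set (∀ j, X j)) :
    nashEq f S = paretoArgmin (bigCone X) (fun x => (x, f x)) S := by
  ext xs
  simp only [nashEq, paretoArgmin, bigCone, Set.mem_setOf_eq, Prod.fst_sub, Prod.snd_sub]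
  constructor
  · rintro ⟨hS, hNE⟩
    refine ⟨hS, fun x hx ⟨i, hzero, hge⟩ => ⟨i, fun j hj => by
      have := hzero j hj
      simp only [Pi.sub_apply, sub_eq_zero] at this ⊢
      exact this.symm, ?_⟩⟩
    · have hx_eq : x = Function.update xs i (x i) := by
        funext j
        by_cases h : j = i
        · subst h; simp
        · have := hzero j h
          simp only [Pi.sub_apply, sub_eq_zero] at this
          simp [Function.update_of_ne h, this]
      have := hNE i (x i) (hx_eq ▸ hx)
      rw [← hx_eq] at this
      simp only [Pi.sub_apply] at hge ⊢
      linarith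
  · rintro ⟨hS, hP⟩
    refine ⟨hS, fun i xi hx => ?_⟩
    by_contra hlt
    push_neg at hlt
    set x := Function.update xs i xi with hxdef
    have hC : (xs - x, f xs - f x) ∈ {p : (∀ j, X j) × (Fin N → ℝ) | ∃ i, (∀ j, j ≠ i → p.1 j = 0) ∧ 0 ≤ p.2 i} := by
      exact ⟨i, fun j hj => by simp [hxdef, Function.update_of_ne hj], by
        simp only [Pi.sub_apply]; linarith⟩
    obtain ⟨i', hz, hge⟩ := hP x hx hC
    by_cases h : i' = i
    · subst h
      simp only [Pi.sub_apply] at hge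
      linarith
    · have := hz i (fun e => h e.symm)
      simp only [Pi.sub_apply, sub_eq_zero] at this
      have hxeq : x = xs := by
        funext j
        by_cases hji : j = i
        · subst hji; exact this
        · simp [hxdef, Function.update_of_ne hji]
      rw [hxeq] at hlt
      linarith
end

section
/- For the shared constraint game, the set of C_i-Pareto minimizers of (x, f(x)) over X equals the graph of player i's best response correspondence: C_i-argmin{(x,f(x)) : x ∈ X} = {x* ∈ X : x*_i ∈ argmin_{x_i}{f_i(x_i, x*_{-i}) : (x_i, x*_{-i}) ∈ X}}. -/
/-- The graph of player `i`'s best response correspondence: feasible `x*`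
such that `x*_i` minimizes `f_i(·, x*_{-i})` over feasible deviations. -/
def bestResponseGraph {N : ℕ} {X : Fin N → Type*} (f : (∀ j, X j) → Fin N → ℝ)
    (S : Set (∀ j, X j)) (i : Fin N) : Set (∀ j, X j) :=
  {xs | xs ∈ S ∧ ∀ xi : X i,
    Function.update xs i xi ∈ S → f xs i ≤ f (Function.update xs i xi) i}

/-- The `C_i`-Pareto minimizers over `X` coincide with the graph of player
`i`'s best response correspondence. -/
theorem paretoArgmin_eq_bestResponseGraph {N : ℕ} (X : Fin N → Type*)
    [∀ j, AddCommGroup (X j)] [∀ j, Module ℝ (X j)]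
    (f : (∀ j, X j) → Fin N → ℝ) (S : Set (∀ j, X j)) (i : Fin N) :
    paretoArgmin (playerCone X i) (fun x => (x, f x)) S =
      bestResponseGraph f S i := by
  ext xs
  simp only [paretoArgmin, playerCone, bestResponseGraph, Set.mem_setOf_eq,
    Prod.fst_sub, Prod.snd_sub, Pi.sub_apply, sub_eq_zero, sub_nonneg]
  constructor
  · rintro ⟨hxs, h⟩
    refine ⟨hxs, fun xi hmem => ?_⟩
    rcases le_total (f xs i) (f (Function.update xs i xi) i) with hle | hle
    · exact hle
    · exact (h _ hmem ⟨fun j hj => (Function.update_of_ne hj xi xs).symm, hle⟩).2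
  · rintro ⟨hxs, h⟩
    refine ⟨hxs, fun x hx ⟨h1, h2⟩ => ?_⟩
    have hx' : x = Function.update xs i (x i) := by
      funext j
      by_cases hj : j = i
      · subst hj; simp
      · simp [Function.update_of_ne hj, h1 j hj]
    refine ⟨fun j hj => (h1 j hj).symm, ?_⟩
    rw [hx']
    exact h (x i) (hx' ▸ hx)
end

section
/- Necessary condition for generalized Nash equilibria: If X̄ ⊆ ⋂_{i=1}^N 𝕏_i, then every generalized Nash equilibrium x* that lies in X̄ is a C-Pareto minimizer of (x, f(x)) over X̄: NE(f, (𝕏_i)) ∩ X̄ ⊆ C-argmin{(x, f(x)) : x ∈ X̄}. -/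
/-- The set of generalized Nash equilibria: `x* ∈ ⋂ i, 𝕏 i` such that no
player `i` can strictly decrease her cost by a unilateral deviation that is
feasible for her own constraint set `𝕏 i`. -/
def genNashEq {N : ℕ} {X : Fin N → Type*} (f : (∀ j, X j) → Fin N → ℝ)
    (K : Fin N → Set (∀ j, X j)) : Set (∀ j, X j) :=
  {xs | xs ∈ ⋂ i, K i ∧ ∀ (i : Fin N) (xi : X i),
    Function.update xs i xi ∈ K i → f xs i ≤ f (Function.update xs i xi) i}


/-- Necessary condition for generalized Nash equilibria: if `X̄ ⊆ ⋂ i, 𝕏 i`,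
then every generalized Nash equilibrium lying in `X̄` is a `C`-Pareto minimizer
of `x ↦ (x, f(x))` over `X̄`. -/
theorem genNashEq_subset_paretoArgmin {N : ℕ} (X : Fin N → Type*)
    [∀ j, AddCommGroup (X j)] [∀ j, Module ℝ (X j)]
    (f : (∀ j, X j) → Fin N → ℝ) (K : Fin N → Set (∀ j, X j))
    (Xbar : Set (∀ j, X j)) (hXbar : Xbar ⊆ ⋂ i, K i) :
    genNashEq f K ∩ Xbar ⊆ paretoArgmin (bigCone X) (fun x => (x, f x)) Xbar := by
  rintro xs ⟨⟨_, hne⟩, hbar⟩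
  refine ⟨hbar, fun x hx ⟨i, hzero, hge⟩ => ?_⟩
  have hx' : x = Function.update xs i (x i) := by
    funext j
    by_cases hj : j = i
    · subst hj; simp
    · rw [Function.update_of_ne hj]
      exact (sub_eq_zero.mp (hzero j hj)).symm
  have hK : Function.update xs i (x i) ∈ K i := by
    rw [← hx']; exact Set.mem_iInter.mp (hXbar hx) i
  have hle : f xs i ≤ f x i := by
    have := hne i (x i) hK; rwa [← hx'] at this
  have heq : f x i = f xs i := le_antisymm (by simpa using hge) hle
  refine ⟨i, fun j hj => ?_, by simp [heq]⟩
  show x j - xs j = 0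
  rw [sub_eq_zero]; exact (sub_eq_zero.mp (hzero j hj)).symm
end

section
/- Sufficient condition for generalized Nash equilibria: If 𝕏̲ ⊇ ⋃_{i=1}^N 𝕏_i, then every x* in C-argmin{(x, f(x)) : x ∈ 𝕏̲} that also lies in ⋂_{i=1}^N 𝕏_i is a generalized Nash equilibrium: (C-argmin{(x,f(x)) : x ∈ 𝕏̲}) ∩ (⋂_i 𝕏_i) ⊆ NE(f, (𝕏_i)). -/
/-- Sufficient condition for generalized Nash equilibria: if `𝕏̲ ⊇ ⋃ i, 𝕏 i`,
then every `C`-Pareto minimizer over `𝕏̲` that is feasible for the generalized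
game (i.e. lies in `⋂ i, 𝕏 i`) is a generalized Nash equilibrium. -/
theorem paretoArgmin_inter_subset_genNashEq {N : ℕ} (X : Fin N → Type*)
    [∀ j, AddCommGroup (X j)] [∀ j, Module ℝ (X j)]
    (f : (∀ j, X j) → Fin N → ℝ) (K : Fin N → Set (∀ j, X j))
    (Xund : Set (∀ j, X j)) (hXund : (⋃ i, K i) ⊆ Xund) :
    paretoArgmin (bigCone X) (fun x => (x, f x)) Xund ∩ (⋂ i, K i) ⊆
      genNashEq f K := by
  rintro xs ⟨⟨hxsS, hmin⟩, hxsK⟩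
  refine ⟨hxsK, fun i xi hKi => ?_⟩
  set y := Function.update xs i xi with hy
  have hyS : y ∈ Xund := hXund (Set.mem_iUnion.2 ⟨i, hKi⟩)
  rcases le_total (f xs i) (f y i) with h | h
  · exact h
  · -- f y i ≤ f xs i, so g xs - g y ∈ bigCone
    have hdiff : ∀ j, j ≠ i → xs j - y j = 0 := by
      intro j hj
      simp [hy, Function.update_of_ne hj]
    have hmem : ((fun x => (x, f x)) xs - (fun x => (x, f x)) y) ∈ bigCone X := by
      refine ⟨i, fun j hj => hdiff j hj, ?_⟩
      simp only [Prod.snd_sub, Pi.sub_apply, sub_nonneg]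
      exact h
    obtain ⟨k, hk1, hk2⟩ := hmin y hyS hmem
    by_cases hxi : xi = xs i
    · simp [hy, hxi]
    · have hki : k = i := by
        by_contra hki
        have := hk1 i (fun h' => hki h'.symm)
        simp only [Prod.fst_sub, Pi.sub_apply, hy, Function.update_self] at this
        exact hxi (sub_eq_zero.mp this)
      have : 0 ≤ f y i - f xs i := by
        have := hk2
        simp only [Prod.snd_sub, Pi.sub_apply, hki] at this ⊢
        exact this
      linarith
end

section
/- Every generalized Nash equilibrium lies in the intersection over i of the C_i-Pareto minimizers over ⋂_j 𝕏_j: NE(f, (𝕏_i)_{i=1}^N) ⊆ ⋂_{i=1}^N C_i-argmin{(x, f(x)) : x ∈ ⋂_{j=1}^N 𝕏_j}. -/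
/-- Every generalized Nash equilibrium lies in the intersection over `i` of the
`C_i`-Pareto minimizers over `⋂ j, 𝕏 j`. -/
theorem genNashEq_subset_iInter_paretoArgmin {N : ℕ} (X : Fin N → Type*)
    [∀ j, AddCommGroup (X j)] [∀ j, Module ℝ (X j)]
    (f : (∀ j, X j) → Fin N → ℝ) (K : Fin N → Set (∀ j, X j)) :
    genNashEq f K ⊆
      ⋂ i : Fin N, paretoArgmin (playerCone X i) (fun x => (x, f x)) (⋂ j, K j) := by
  rintro xs ⟨hxs, hne⟩
  refine Set.mem_iInter.2 fun i => ⟨hxs, fun x hx ⟨h1, h2⟩ => ?_⟩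
  have hxeq : x = Function.update xs i (x i) := by
    funext j
    by_cases hj : j = i
    · subst hj; simp
    · have := h1 j hj
      simp only [Prod.fst_sub, Pi.sub_apply] at this
      rw [Function.update_of_ne hj]
      exact (sub_eq_zero.mp this).symm
  have hxKi : Function.update xs i (x i) ∈ K i := hxeq ▸ Set.mem_iInter.1 hx i
  have hle := hne i (x i) hxKi
  rw [← hxeq] at hle
  refine ⟨fun j hj => ?_, ?_⟩
  · have := h1 j hj
    simp only [Prod.fst_sub, Pi.sub_apply] at this ⊢
    rw [sub_eq_zero] at this ⊢
    exact this.symm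
  · simp only [Prod.snd_sub, Pi.sub_apply] at h2 ⊢
    linarith
end

section
/- Exact characterization of generalized Nash equilibria: Let M = {x* ∈ NE(f, ⋂_i 𝕏_i) : ∃ i with inf{f_i(x_i, x*_{-i}) : (x_i, x*_{-i}) ∈ 𝕏_i} < f_i(x*)}. Then NE(f, (𝕏_i)_{i=1}^N) = C-argmin{(x, f(x)) : x ∈ ⋂_{i=1}^N 𝕏_i} \ M. -/
/-- The set of Nash equilibria of the shared constraint game with constraint
`⋂ i, 𝕏 i`. -/
def nashEqShared {N : ℕ} {X : Fin N → Type*} (f : (∀ j, X j) → Fin N → ℝ)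
    (K : Fin N → Set (∀ j, X j)) : Set (∀ j, X j) :=
  {xs | xs ∈ ⋂ i, K i ∧ ∀ (i : Fin N) (xi : X i),
    Function.update xs i xi ∈ ⋂ j, K j → f xs i ≤ f (Function.update xs i xi) i}

/-- The exceptional set `M`: equilibria of the shared-constraint intersection
game at which some player could strictly decrease her cost by a deviation that
is feasible for her own constraint set (i.e. `inf {f_i(x_i, x*_{-i}) :
(x_i, x*_{-i}) ∈ 𝕏_i} < f_i(x*)`). -/
def exceptSet {N : ℕ} {X : Fin N → Type*} (f : (∀ j, X j) → Fin N → ℝ)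
    (K : Fin N → Set (∀ j, X j)) : Set (∀ j, X j) :=
  {xs | xs ∈ nashEqShared f K ∧ ∃ (i : Fin N) (xi : X i),
    Function.update xs i xi ∈ K i ∧ f (Function.update xs i xi) i < f xs i}



private lemma eq_update_of_agree {N : ℕ} {X : Fin N → Type*} (xs x : ∀ j, X j)
    (i : Fin N) (h : ∀ j, j ≠ i → x j = xs j) : x = Function.update xs i (x i) := by
  funext j
  rcases eq_or_ne j i with rfl | hj
  · simp
  · simp [Function.update_of_ne hj, h j hj]

/-- Exact characterization of generalized Nash equilibria:
`NE(f, (𝕏_i)) = C-argmin {(x, f(x)) : x ∈ ⋂ i, 𝕏 i} \ M`. -/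
theorem genNashEq_eq_paretoArgmin_diff {N : ℕ} (X : Fin N → Type*)
    [∀ j, AddCommGroup (X j)] [∀ j, Module ℝ (X j)]
    (f : (∀ j, X j) → Fin N → ℝ) (K : Fin N → Set (∀ j, X j)) :
    genNashEq f K =
      paretoArgmin (bigCone X) (fun x => (x, f x)) (⋂ i, K i) \ exceptSet f K := by
  ext xs
  simp only [genNashEq, paretoArgmin, exceptSet, nashEqShared, bigCone,
    Set.mem_diff, Set.mem_setOf_eq, Prod.fst_sub, Prod.snd_sub, Pi.sub_apply,
    sub_nonneg, sub_eq_zero, Set.mem_iInter]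
  constructor
  · rintro ⟨hmem, hne⟩
    have hshared : ∀ (i : Fin N) (xi : X i),
        (∀ j, Function.update xs i xi ∈ K j) → f xs i ≤ f (Function.update xs i xi) i :=
      fun i xi h => hne i xi (h i)
    refine ⟨⟨hmem, ?_⟩, ?_⟩
    · rintro x hx ⟨i, hzero, hfi⟩
      rcases eq_or_ne x xs with rfl | hxxs
      · exact ⟨i, fun j _ => rfl, le_refl _⟩
      · have hxeq : x = Function.update xs i (x i) :=
          eq_update_of_agree xs x i (fun j hj => (hzero j hj).symm)
        refine ⟨i, fun j hj => (hzero j hj).symm, ?_⟩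
        have := hshared i (x i) (by rw [← hxeq]; exact hx)
        rw [← hxeq] at this
        exact this
    · rintro ⟨-, i, xi, hKi, hlt⟩
      exact absurd (hne i xi hKi) (not_le.mpr hlt)
  · rintro ⟨⟨hmem, hpar⟩, hnot⟩
    refine ⟨hmem, fun i xi hKi => ?_⟩
    by_contra hlt
    push_neg at hlt
    refine hnot ⟨⟨hmem, ?_⟩, i, xi, hKi, hlt⟩
    intro i' xi' hin
    by_contra hlt'
    push_neg at hlt'
    have h := hpar (Function.update xs i' xi') hin
      ⟨i', fun j hj => by simp [Function.update_of_ne hj], le_of_lt hlt'⟩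
    rcases h with ⟨i'', hzero, hge⟩
    rcases eq_or_ne i'' i' with rfl | hne''
    · exact absurd hge (not_le.mpr hlt')
    · have : Function.update xs i' xi' i' = xs i' := by
        have := hzero i' (fun h => hne'' h.symm)
        simpa using this
      rw [Function.update_self] at this
      rw [this, Function.update_eq_self] at hlt'
      exact lt_irrefl _ hlt'
end

section
/- Vector-valued generalized game, necessary condition: For a generalized game with vector-valued costs f_i: ∏_j X_j → Y_i ordered by convex cones K_i, and X̄ ⊆ ⋂_i 𝕏_i, every generalized Nash equilibrium x* ∈ X̄ is a C-Pareto minimizer of (x, f(x)) over X̄, where C = {(x, (f_i)) : ∃ i, x_{-i} = 0, f_i ∈ K_i}. -/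
/-- The cone `C_i` for player `i` inside `(∏ j, X j) × (∏ j, Y j)`:
all strategy components other than `i` vanish and the `i`-th cost component
lies in the ordering cone `K i`. -/
def vPlayerCone {N : ℕ} (X : Fin N → Type*) [∀ j, AddCommGroup (X j)]
    [∀ j, Module ℝ (X j)] (Y : Fin N → Type*) [∀ j, AddCommGroup (Y j)]
    [∀ j, Module ℝ (Y j)] (K : ∀ j, Set (Y j)) (i : Fin N) :
    Set ((∀ j, X j) × (∀ j, Y j)) :=
  {p | (∀ j, j ≠ i → p.1 j = 0) ∧ p.2 i ∈ K i}

/-- The non-convex ordering cone `C = ⋃ i, C_i` for vector-valued games. -/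
def vBigCone {N : ℕ} (X : Fin N → Type*) [∀ j, AddCommGroup (X j)]
    [∀ j, Module ℝ (X j)] (Y : Fin N → Type*) [∀ j, AddCommGroup (Y j)]
    [∀ j, Module ℝ (Y j)] (K : ∀ j, Set (Y j)) :
    Set ((∀ j, X j) × (∀ j, Y j)) :=
  {p | ∃ i, (∀ j, j ≠ i → p.1 j = 0) ∧ p.2 i ∈ K i}

/-- Generalized Nash equilibria of the vector-valued game: `x* ∈ ⋂ i, 𝕏 i`
such that for each player `i` and each deviation feasible for `𝕏 i`,
`f_i(x_i, x*_{-i}) ≤_{K_i} f_i(x*)` implies `f_i(x_i, x*_{-i}) ≥_{K_i} f_i(x*)`. -/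
def vGenNashEq {N : ℕ} {X : Fin N → Type*} {Y : Fin N → Type*}
    [∀ j, AddCommGroup (Y j)] (f : (∀ j, X j) → ∀ j, Y j)
    (K : ∀ j, Set (Y j)) (C : Fin N → Set (∀ j, X j)) : Set (∀ j, X j) :=
  {xs | xs ∈ ⋂ i, C i ∧ ∀ (i : Fin N) (xi : X i),
    Function.update xs i xi ∈ C i →
      (f xs i - f (Function.update xs i xi) i ∈ K i →
        f (Function.update xs i xi) i - f xs i ∈ K i)}


/-- Vector-valued generalized game, necessary condition: if each `K i` is a
convex cone and `X̄ ⊆ ⋂ i, 𝕏 i`, then every generalized Nash equilibrium of the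
vector-valued game lying in `X̄` is a `C`-Pareto minimizer of `x ↦ (x, f(x))`
over `X̄`. -/
theorem vGenNashEq_subset_paretoArgmin {N : ℕ} (X : Fin N → Type*)
    [∀ j, AddCommGroup (X j)] [∀ j, Module ℝ (X j)]
    (Y : Fin N → Type*) [∀ j, AddCommGroup (Y j)] [∀ j, Module ℝ (Y j)]
    (K : ∀ j, Set (Y j))
    (hK_cone : ∀ j, ∀ (α : ℝ), 0 ≤ α → ∀ y ∈ K j, α • y ∈ K j)
    (hK_conv : ∀ j, ∀ y ∈ K j, ∀ z ∈ K j, y + z ∈ K j)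
    (f : (∀ j, X j) → ∀ j, Y j) (C : Fin N → Set (∀ j, X j))
    (Xbar : Set (∀ j, X j)) (hXbar : Xbar ⊆ ⋂ i, C i) :
    vGenNashEq f K C ∩ Xbar ⊆
      paretoArgmin (vBigCone X Y K) (fun x => (x, f x)) Xbar := by
  rintro xs ⟨⟨hmem, hnash⟩, hXs⟩
  refine ⟨hXs, fun x hx ⟨i, hzero, hKi⟩ => ?_⟩
  have hupd : Function.update xs i (x i) = x := by
    funext j
    by_cases h : j = i
    · subst h; simp
    · have := hzero j h
      rw [Function.update_of_ne h]
      exact sub_eq_zero.mp this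
  have hxC : x ∈ C i := Set.mem_iInter.mp (hXbar hx) i
  have := hnash i (x i) (by rw [hupd]; exact hxC)
  rw [hupd] at this
  exact ⟨i, fun j hj => sub_eq_zero.mpr (sub_eq_zero.mp (hzero j hj)).symm, this hKi⟩
end
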